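/- Let ρ be a density operator (positive trace-class with Tr ρ = 1) on a separable Hilbert space H that is injective, and let X be a bounded self-adjoint operator satisfying the Araki condition for ρ. Then the square of the Bogoliubov–Kubo–Mori norm of X is dominated by the square of the Araki norm: ‖X‖_M² = ∫₀¹ Tr(ρ^t X ρ^{1−t} X) dt ≤ ‖X‖_A², where ‖X‖_A = sup_{|t|<1/2} ‖ρ^t X ρ^{−t}‖. -/

import Mathlib

open scoped InnerProductSpace ENNReal NNReal
open MeasureTheory Metric Filter

noncomputable section

variable {H : Type*} [NormedAddCommGroup H] [InnerProductSpace ℂ H] [CompleteSpace H]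
  [TopologicalSpace.SeparableSpace H]

/-- The real power `ρ ^ t` (for `t ≥ 0`) of a positive operator `ρ`, via the continuous
functional calculus. -/
def opow (ρ : H →L[ℂ] H) (t : ℝ) : H →L[ℂ] H := cfc (fun x : ℝ => x ^ t) ρ

/-- The (real) trace of an operator, computed along the Hilbert basis `b`. -/
def trElem {ι : Type*} (b : HilbertBasis ι ℂ H) (T : H →L[ℂ] H) : ℝ :=
  ∑' i, (⟪b i, T (b i)⟫_ℂ).re

/-- `ρ` is a finite faithful weight: a positive, injective, trace-class operator
(trace-class being witnessed by summability of the diagonal in the Hilbert basis `b`). -/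
def IsFiniteWeight {ι : Type*} (b : HilbertBasis ι ℂ H) (ρ : H →L[ℂ] H) : Prop :=
  0 ≤ ρ ∧ Function.Injective (⇑ρ) ∧ Summable (fun i => (⟪b i, ρ (b i)⟫_ℂ).re)

/-- `σ` is nearby `ρ`: there is `C > 1` with `C⁻¹ ρ ≤ σ ≤ C ρ` in the Loewner order. -/
def IsNearby (σ ρ : H →L[ℂ] H) : Prop :=
  ∃ C : ℝ, 1 < C ∧ C⁻¹ • ρ ≤ σ ∧ σ ≤ C • ρ

/-- `F` is the Araki family `t ↦ ρ^t X ρ^{-t}` of `X` relative to `ρ`: a bounded holomorphic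
`B(H)`-valued extension to the disc `|t| < 1/2` of `t ↦ ρ^t X ρ^{-t}`, the latter being
expressed by `F t * ρ^t = ρ^t * X` and `ρ^t * F (-t) = X * ρ^t` for real `0 ≤ t < 1/2`. -/
def IsArakiFamily (ρ X : H →L[ℂ] H) (F : ℂ → H →L[ℂ] H) : Prop :=
  DifferentiableOn ℂ F (ball (0:ℂ) (1/2)) ∧
  (∃ M : ℝ, ∀ t ∈ ball (0:ℂ) (1/2), ‖F t‖ ≤ M) ∧
  (∀ t : ℝ, 0 ≤ t → t < 1/2 → F (t:ℂ) * opow ρ t = opow ρ t * X) ∧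
  (∀ t : ℝ, 0 ≤ t → t < 1/2 → opow ρ t * F (-(t:ℂ)) = X * opow ρ t)

/-- `X` satisfies the Araki condition for `ρ`. -/
def SatisfiesAraki (ρ X : H →L[ℂ] H) : Prop := ∃ F, IsArakiFamily ρ X F

/-- The Araki norm `‖X‖_A = sup_{|t| < 1/2} ‖ρ^t X ρ^{-t}‖`. -/
def arakiNorm (ρ X : H →L[ℂ] H) : ℝ :=
  sInf {M : ℝ | 0 ≤ M ∧ ∃ F, IsArakiFamily ρ X F ∧ ∀ t ∈ ball (0:ℂ) (1/2), ‖F t‖ ≤ M}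

/-- `σ = exp (-(H₀ + X))` where `ρ = exp (-H₀)`: the semigroup `t ↦ σ^t` is the mild
(Duhamel) solution of the semigroup `t ↦ ρ^t` perturbed by the bounded operator `-X`,
i.e. `σ^t = ρ^t - ∫_0^t ρ^{t-s} X σ^s ds` for all `t ≥ 0`. -/
def IsExpPerturbed (ρ σ X : H →L[ℂ] H) : Prop :=
  ∀ t : ℝ, 0 ≤ t →
    opow σ t = opow ρ t - ∫ s in (0:ℝ)..t, opow ρ (t - s) * X * opow σ s

/-- The truncation `x ↦ -log (x + e^{-n})` of `-log`; it increases pointwise to `-log x`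
as `n → ∞` and is operator anti-monotone. -/
def negLogTrunc (n : ℕ) (x : ℝ) : ℝ := - Real.log (x + Real.exp (-(n:ℝ)))

/-- The regularised quadratic form `⟪ξ, (-log (ρ + e^{-n})) ξ⟫` of `H₀ = -log ρ`. -/
def negLogFormSeq (ρ : H →L[ℂ] H) (ξ : H) (n : ℕ) : ℝ :=
  (⟪ξ, (cfc (negLogTrunc n) ρ) ξ⟫_ℂ).re

/-- `ξ` lies in the form domain `Q(H₀) = Dom (H₀^{1/2})` of `H₀ = -log ρ`. -/
def InFormDomain (ρ : H →L[ℂ] H) (ξ : H) : Prop :=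
  BddAbove (Set.range (negLogFormSeq ρ ξ))

/-- The value `⟪ξ, H₀ ξ⟫` of the quadratic form of `H₀ = -log ρ` (a monotone limit). -/
def negLogForm (ρ : H →L[ℂ] H) (ξ : H) : ℝ := ⨆ n, negLogFormSeq ρ ξ n

/-- The regularised quadratic form `⟪ξ, (σ + e^{-n})⁻¹ ξ⟫` of `σ⁻¹`. -/
def invFormSeq (σ : H →L[ℂ] H) (ξ : H) (n : ℕ) : ℝ :=
  (⟪ξ, (cfc (fun x : ℝ => (x + Real.exp (-(n:ℝ)))⁻¹) σ) ξ⟫_ℂ).re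

/-- The quadratic form `⟪ξ, σ⁻¹ ξ⟫ ∈ [0, ∞]` of the (possibly unbounded) inverse `σ⁻¹`
of the injective positive operator `σ`, as a monotone limit of regularisations. -/
def invForm (σ : H →L[ℂ] H) (ξ : H) : ℝ≥0∞ :=
  ⨆ n : ℕ, ENNReal.ofReal (invFormSeq σ ξ n)

/-- `S` is the relative entropy `S(ρ|σ) = Tr (ρ (log ρ - log σ))`, obtained as the limit of
the regularised quantities `Tr (ρ (log (ρ + e^{-n}) - log (σ + e^{-n})))`. -/
def IsRelativeEntropy {ι : Type*} (b : HilbertBasis ι ℂ H) (ρ σ : H →L[ℂ] H) (S : ℝ) : Prop :=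
  Tendsto (fun n : ℕ => trElem b (ρ * (cfc (negLogTrunc n) σ - cfc (negLogTrunc n) ρ)))
    atTop (nhds S)

/-- The `n`-th term of the Matsubara (Dyson/expansional) series: the integral over the
ordered simplex `0 ≤ s₁ ≤ ⋯ ≤ sₙ ≤ 1` (of volume `1/n!`) of the product
`F(s₁ - 1/2) ⋯ F(sₙ - 1/2)`, where `F t = ρ^t X ρ^{-t}`. -/
def matsubaraTerm (F : ℂ → H →L[ℂ] H) (n : ℕ) : H →L[ℂ] H :=
  ∫ s in {s : Fin n → ℝ | (∀ i, s i ∈ Set.Icc (0:ℝ) 1) ∧ Monotone s},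
    (List.ofFn fun i => F (((s i - 1/2 : ℝ) : ℂ))).prod


section Aux
set_option linter.unusedSectionVars false


lemma opow_contOn (ρ : H →L[ℂ] H) {t : ℝ} (ht : 0 ≤ t) :
    ContinuousOn (fun x : ℝ => x ^ t) (spectrum ℝ ρ) :=
  (Real.continuous_rpow_const ht).continuousOn

lemma opow_zero (ρ : H →L[ℂ] H) (h : 0 ≤ ρ) : opow ρ 0 = 1 := by
  have : opow ρ 0 = cfc (fun _ : ℝ => (1:ℝ)) ρ := by
    unfold opow
    exact cfc_congr (fun x _ => Real.rpow_zero x)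
  rw [this, cfc_const_one ℝ ρ h.isSelfAdjoint]

lemma opow_add (ρ : H →L[ℂ] H) (h : 0 ≤ ρ) {a c : ℝ} (ha : 0 ≤ a) (hc : 0 ≤ c) :
    opow ρ (a + c) = opow ρ a * opow ρ c := by
  unfold opow
  rw [← cfc_mul _ _ ρ (opow_contOn ρ ha) (opow_contOn ρ hc)]
  exact cfc_congr fun x hx =>
    Real.rpow_add_of_nonneg (spectrum_nonneg_of_nonneg h hx) ha hc

lemma opow_one (ρ : H →L[ℂ] H) (h : 0 ≤ ρ) : opow ρ 1 = ρ := by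
  have : opow ρ 1 = cfc (id : ℝ → ℝ) ρ := by
    unfold opow
    exact cfc_congr (fun x _ => Real.rpow_one x)
  rw [this, cfc_id ℝ ρ h.isSelfAdjoint]

lemma opow_sa (ρ : H →L[ℂ] H) (t : ℝ) : IsSelfAdjoint (opow ρ t) := cfc_predicate _ ρ



lemma sa_inner {T : H →L[ℂ] H} (hT : IsSelfAdjoint T) (x y : H) :
    ⟪x, T y⟫_ℂ = ⟪T x, y⟫_ℂ := by
  conv_lhs => rw [← hT.star_eq, ContinuousLinearMap.star_eq_adjoint]
  rw [ContinuousLinearMap.adjoint_inner_right]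

lemma parseval {ι : Type*} (b : HilbertBasis ι ℂ H) (x : H) :
    HasSum (fun j => ‖⟪b j, x⟫_ℂ‖ ^ 2) (‖x‖ ^ 2) := by
  have h2 := (b.hasSum_inner_mul_inner x x).mapL Complex.reCLM
  have e1 : (fun i => Complex.reCLM (⟪x, b i⟫_ℂ * ⟪b i, x⟫_ℂ)) =
      fun i => ‖⟪b i, x⟫_ℂ‖ ^ 2 := by
    funext i
    have h3 : ⟪x, b i⟫_ℂ = (starRingEnd ℂ) ⟪b i, x⟫_ℂ := (inner_conj_symm _ _).symm
    rw [h3]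
    generalize ⟪b i, x⟫_ℂ = z
    simp [Complex.mul_re, Complex.sq_norm, Complex.normSq_apply]

  have e2 : Complex.reCLM ⟪x, x⟫_ℂ = ‖x‖ ^ 2 := by
    simpa using inner_self_eq_norm_sq (𝕜 := ℂ) x
  rwa [e1, e2] at h2

lemma hs_swap {ι : Type*} (b : HilbertBasis ι ℂ H) (A : H →L[ℂ] H) :
    ∑' i, ENNReal.ofReal (‖A (b i)‖ ^ 2) =
      ∑' i, ENNReal.ofReal (‖ContinuousLinearMap.adjoint A (b i)‖ ^ 2) := by
  have key : ∀ (B : H →L[ℂ] H) (i : ι), ENNReal.ofReal (‖B (b i)‖ ^ 2) =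
      ∑' j, ENNReal.ofReal (‖⟪b j, B (b i)⟫_ℂ‖ ^ 2) := by
    intro B i
    have h := parseval b (B (b i))
    rw [← h.tsum_eq, ENNReal.ofReal_tsum_of_nonneg (fun j => by positivity) h.summable]
  calc ∑' i, ENNReal.ofReal (‖A (b i)‖ ^ 2)
      = ∑' i, ∑' j, ENNReal.ofReal (‖⟪b j, A (b i)⟫_ℂ‖ ^ 2) := by
        exact tsum_congr fun i => key A i
    _ = ∑' j, ∑' i, ENNReal.ofReal (‖⟪b j, A (b i)⟫_ℂ‖ ^ 2) := ENNReal.tsum_comm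
    _ = ∑' j, ∑' i, ENNReal.ofReal (‖⟪b i, ContinuousLinearMap.adjoint A (b j)⟫_ℂ‖ ^ 2) := by
        refine tsum_congr fun j => tsum_congr fun i => ?_
        congr 2
        rw [← ContinuousLinearMap.adjoint_inner_left]
        exact norm_inner_symm _ _
    _ = ∑' j, ENNReal.ofReal (‖ContinuousLinearMap.adjoint A (b j)‖ ^ 2) := by
        exact tsum_congr fun j => (key (ContinuousLinearMap.adjoint A) j).symm

lemma hs_transfer {ι : Type*} (b : HilbertBasis ι ℂ H) (A : H →L[ℂ] H)
    (hsum : Summable fun j => ‖ContinuousLinearMap.adjoint A (b j)‖ ^ 2) :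
    Summable (fun i => ‖A (b i)‖ ^ 2) ∧
      ∑' i, ‖A (b i)‖ ^ 2 = ∑' j, ‖ContinuousLinearMap.adjoint A (b j)‖ ^ 2 := by
  have h1 : ∑' i, ENNReal.ofReal (‖A (b i)‖ ^ 2) =
      ENNReal.ofReal (∑' j, ‖ContinuousLinearMap.adjoint A (b j)‖ ^ 2) := by
    rw [hs_swap, ENNReal.ofReal_tsum_of_nonneg (fun j => by positivity) hsum]
  have hne : ∑' i, ENNReal.ofReal (‖A (b i)‖ ^ 2) ≠ ⊤ := by
    rw [h1]; exact ENNReal.ofReal_ne_top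
  have hs : Summable (fun i => ‖A (b i)‖ ^ 2) := by
    exact (ENNReal.summable_toReal hne).congr fun i =>
      ENNReal.toReal_ofReal (by positivity)
  refine ⟨hs, ?_⟩
  have h2 : ENNReal.ofReal (∑' i, ‖A (b i)‖ ^ 2) =
      ENNReal.ofReal (∑' j, ‖ContinuousLinearMap.adjoint A (b j)‖ ^ 2) := by
    rw [ENNReal.ofReal_tsum_of_nonneg (fun i => by positivity) hs, h1]
  have := congrArg ENNReal.toReal h2
  rwa [ENNReal.toReal_ofReal (tsum_nonneg fun i => by positivity),
    ENNReal.toReal_ofReal (tsum_nonneg fun j => by positivity)] at this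

lemma trace_bound {ι : Type*} (b : HilbertBasis ι ℂ H) (R G X : H →L[ℂ] H)
    (hR : IsSelfAdjoint R) (hX : IsSelfAdjoint X)
    (ha : Summable fun i => ‖R (b i)‖ ^ 2) (hatr : ∑' i, ‖R (b i)‖ ^ 2 ≤ 1)
    (M : ℝ) (hG : ‖G‖ ≤ M) :
    trElem b (R * G * R * X) ≤ M * ‖X‖ := by
  by_cases hX0 : X = 0
  · subst hX0
    have hM : 0 ≤ M := le_trans (norm_nonneg G) hG
    simp [trElem]
  have hXpos : 0 < ‖X‖ := norm_pos_iff.mpr hX0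
  set a : ι → ℝ := fun i => ‖R (b i)‖ with ha_def
  set c : ι → ℝ := fun i => ‖(R * X) (b i)‖ with hc_def
  have hadj : ContinuousLinearMap.adjoint (R * X) = X * R := by
    rw [← ContinuousLinearMap.star_eq_adjoint, star_mul, hX.star_eq, hR.star_eq]
  have hXRsum : Summable fun j => ‖(X * R) (b j)‖ ^ 2 := by
    refine Summable.of_nonneg_of_le (fun j => by positivity) (fun j => ?_)
      (ha.mul_left (‖X‖ ^ 2))
    have : ‖(X * R) (b j)‖ ≤ ‖X‖ * ‖R (b j)‖ := by
      simpa using (X.le_opNorm (R (b j)))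
    calc ‖(X * R) (b j)‖ ^ 2 ≤ (‖X‖ * ‖R (b j)‖) ^ 2 := by
          exact pow_le_pow_left₀ (norm_nonneg _) this 2
      _ = ‖X‖ ^ 2 * ‖R (b j)‖ ^ 2 := by ring
  have hadjsum : Summable fun j => ‖ContinuousLinearMap.adjoint (R * X) (b j)‖ ^ 2 := by
    rw [hadj]; exact hXRsum
  obtain ⟨hcsum, hceq⟩ := hs_transfer b (R * X) hadjsum
  have hcbound : ∑' i, c i ^ 2 ≤ ‖X‖ ^ 2 := by
    rw [hc_def]
    simp only
    rw [hceq, hadj]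
    calc ∑' j, ‖(X * R) (b j)‖ ^ 2 ≤ ∑' j, ‖X‖ ^ 2 * ‖R (b j)‖ ^ 2 := by
          refine Summable.tsum_le_tsum (fun j => ?_) hXRsum (ha.mul_left _)
          have : ‖(X * R) (b j)‖ ≤ ‖X‖ * ‖R (b j)‖ := by
            simpa using (X.le_opNorm (R (b j)))
          calc ‖(X * R) (b j)‖ ^ 2 ≤ (‖X‖ * ‖R (b j)‖) ^ 2 :=
                pow_le_pow_left₀ (norm_nonneg _) this 2
            _ = ‖X‖ ^ 2 * ‖R (b j)‖ ^ 2 := by ring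
      _ = ‖X‖ ^ 2 * ∑' j, ‖R (b j)‖ ^ 2 := tsum_mul_left
      _ ≤ ‖X‖ ^ 2 * 1 := by
          exact mul_le_mul_of_nonneg_left hatr (by positivity)
      _ = ‖X‖ ^ 2 := mul_one _
  -- per-term bound
  have hterm : ∀ i, |(⟪b i, ((R * G * R * X)) (b i)⟫_ℂ).re| ≤ M * (a i * c i) := by
    intro i
    have happ : ((R * G * R * X)) (b i) = R (G ((R * X) (b i))) := by
      simp [ContinuousLinearMap.mul_apply]
    rw [happ]
    have h1 : ⟪b i, R (G ((R * X) (b i)))⟫_ℂ = ⟪R (b i), G ((R * X) (b i))⟫_ℂ :=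
      sa_inner hR _ _
    rw [h1]
    calc |(⟪R (b i), G ((R * X) (b i))⟫_ℂ).re| ≤ ‖⟪R (b i), G ((R * X) (b i))⟫_ℂ‖ :=
          Complex.abs_re_le_norm _
      _ ≤ ‖R (b i)‖ * ‖G ((R * X) (b i))‖ := norm_inner_le_norm _ _
      _ ≤ ‖R (b i)‖ * (‖G‖ * ‖(R * X) (b i)‖) := by
          refine mul_le_mul_of_nonneg_left (G.le_opNorm _) (norm_nonneg _)
      _ ≤ M * (a i * c i) := by
          have h2 : ‖G‖ ≤ M := hG
          have := norm_nonneg (R (b i))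
          have := norm_nonneg ((R * X) (b i))
          have := norm_nonneg G
          nlinarith [mul_nonneg (norm_nonneg (R (b i))) (norm_nonneg ((R * X) (b i)))]
  have hacsum : Summable fun i => a i * c i := by
    refine Summable.of_nonneg_of_le (fun i => mul_nonneg (norm_nonneg _) (norm_nonneg _))
      (fun i => ?_) ((ha.add hcsum).div_const 2)
    have := sq_nonneg (a i - c i)
    have ha2 : a i ^ 2 = ‖R (b i)‖ ^ 2 := rfl
    nlinarith
  have hMac : Summable fun i => M * (a i * c i) := hacsum.mul_left M
  have hfsum : Summable fun i => (⟪b i, ((R * G * R * X)) (b i)⟫_ℂ).re := by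
    rw [← summable_abs_iff]
    exact Summable.of_nonneg_of_le (fun i => abs_nonneg _) hterm hMac
  have hM : 0 ≤ M := le_trans (norm_nonneg G) hG
  have step1 : trElem b (R * G * R * X) ≤ M * ∑' i, a i * c i := by
    rw [trElem, ← tsum_mul_left]
    exact Summable.tsum_le_tsum (fun i => (le_abs_self _).trans (hterm i)) hfsum hMac
  have step2 : ∑' i, a i * c i ≤ ‖X‖ := by
    have hub : ∀ i, a i * c i ≤ (‖X‖ * a i ^ 2 + c i ^ 2 / ‖X‖) / 2 := by
      intro i
      have hs : Real.sqrt ‖X‖ ^ 2 = ‖X‖ := Real.sq_sqrt hXpos.le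
      have hspos : 0 < Real.sqrt ‖X‖ := Real.sqrt_pos.mpr hXpos
      have key : (Real.sqrt ‖X‖ * a i) * (c i / Real.sqrt ‖X‖) = a i * c i := by
        field_simp
      have hexp : (c i / Real.sqrt ‖X‖) ^ 2 = c i ^ 2 / ‖X‖ := by rw [div_pow, hs]
      calc a i * c i = (Real.sqrt ‖X‖ * a i) * (c i / Real.sqrt ‖X‖) := key.symm
        _ ≤ ((Real.sqrt ‖X‖ * a i) ^ 2 + (c i / Real.sqrt ‖X‖) ^ 2) / 2 := by
            nlinarith [sq_nonneg (Real.sqrt ‖X‖ * a i - c i / Real.sqrt ‖X‖)]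
        _ = (‖X‖ * a i ^ 2 + c i ^ 2 / ‖X‖) / 2 := by rw [mul_pow, hs, hexp]
    have hrsum : Summable fun i => (‖X‖ * a i ^ 2 + c i ^ 2 / ‖X‖) / 2 :=
      ((ha.mul_left ‖X‖).add (hcsum.div_const ‖X‖)).div_const 2
    calc ∑' i, a i * c i ≤ ∑' i, (‖X‖ * a i ^ 2 + c i ^ 2 / ‖X‖) / 2 :=
          Summable.tsum_le_tsum hub hacsum hrsum
      _ = (‖X‖ * ∑' i, a i ^ 2 + (∑' i, c i ^ 2) / ‖X‖) / 2 := by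
          rw [tsum_div_const, Summable.tsum_add (ha.mul_left ‖X‖) (hcsum.div_const ‖X‖),
            tsum_mul_left, tsum_div_const]
      _ ≤ ‖X‖ := by
          rw [div_le_iff₀ (by norm_num : (0:ℝ) < 2)]
          have h1 : ‖X‖ * ∑' i, a i ^ 2 ≤ ‖X‖ * 1 :=
            mul_le_mul_of_nonneg_left hatr hXpos.le
          have h2 : (∑' i, c i ^ 2) / ‖X‖ ≤ ‖X‖ ^ 2 / ‖X‖ := by gcongr
          have h3 : ‖X‖ ^ 2 / ‖X‖ = ‖X‖ := by field_simp
          nlinarith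
  calc trElem b (R * G * R * X) ≤ M * ∑' i, a i * c i := step1
    _ ≤ M * ‖X‖ := mul_le_mul_of_nonneg_left step2 hM

end Aux

/-- For an injective density operator `ρ` (positive trace class with
`Tr ρ = 1`) and a bounded self-adjoint `X` satisfying the Araki condition for `ρ`, the
square of the BKM norm is dominated by the square of the Araki norm:
`‖X‖_M² = ∫₀¹ Tr (ρ^t X ρ^{1-t} X) dt ≤ ‖X‖_A²`. -/
theorem statement8 {ι : Type*} (b : HilbertBasis ι ℂ H) (ρ X : H →L[ℂ] H)
    (hρpos : 0 ≤ ρ) (hρinj : Function.Injective (⇑ρ))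
    (hρtc : Summable (fun i => (⟪b i, ρ (b i)⟫_ℂ).re)) (hρtr : trElem b ρ = 1)
    (hX : IsSelfAdjoint X) (hA : SatisfiesAraki ρ X) :
    ∫ t in (0:ℝ)..1, trElem b (opow ρ t * X * opow ρ (1 - t) * X) ≤ (arakiNorm ρ X) ^ 2 := by
  classical
  set R := opow ρ (1/2) with hR_def
  have hRsa : IsSelfAdjoint R := opow_sa ρ _
  have hRR : R * R = ρ := by
    rw [hR_def, ← opow_add ρ hρpos (by norm_num) (by norm_num)]
    norm_num [opow_one ρ hρpos]
  have hterm_eq : ∀ i, (⟪b i, ρ (b i)⟫_ℂ).re = ‖R (b i)‖ ^ 2 := by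
    intro i
    conv_lhs => rw [← hRR]
    rw [ContinuousLinearMap.mul_apply, sa_inner hRsa]
    simpa using inner_self_eq_norm_sq (𝕜 := ℂ) (R (b i))
  have haSum : Summable fun i => ‖R (b i)‖ ^ 2 := hρtc.congr hterm_eq
  have haTr : ∑' i, ‖R (b i)‖ ^ 2 ≤ 1 := by
    have : ∑' i, ‖R (b i)‖ ^ 2 = trElem b ρ := (tsum_congr hterm_eq).symm
    rw [this, hρtr]
  set S : Set ℝ := {M : ℝ | 0 ≤ M ∧ ∃ F, IsArakiFamily ρ X F ∧
    ∀ t ∈ ball (0:ℂ) (1/2), ‖F t‖ ≤ M} with hS_def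
  have key : ∀ M ∈ S,
      (∫ t in (0:ℝ)..1, trElem b (opow ρ t * X * opow ρ (1 - t) * X)) ≤ M ^ 2 := by
    rintro M ⟨hM0, F, hF, hFM⟩
    obtain ⟨-, -, h3, h4⟩ := hF
    have hX_eq : F 0 = X := by
      have h := h3 0 le_rfl (by norm_num)
      rw [opow_zero ρ hρpos] at h
      simpa using h
    have hXM : ‖X‖ ≤ M := by
      rw [← hX_eq]
      refine hFM 0 ?_
      rw [mem_ball, dist_self]
      norm_num
    have hpt : ∀ t ∈ Set.Ioo (0:ℝ) 1,
        trElem b (opow ρ t * X * opow ρ (1 - t) * X) ≤ M * ‖X‖ := by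
      intro t ht
      obtain ⟨ht0, ht1⟩ := ht
      set s : ℝ := t - 1/2 with hs_def
      have hsball : ((s : ℝ) : ℂ) ∈ ball (0:ℂ) (1/2) := by
        rw [mem_ball, dist_zero_right, Complex.norm_real, Real.norm_eq_abs, abs_lt]
        constructor <;> (rw [hs_def]; linarith)
      have heq : opow ρ t * X * opow ρ (1 - t) = R * F ((s : ℝ) : ℂ) * R := by
        by_cases hcase : (1/2 : ℝ) ≤ t
        · have hs0 : 0 ≤ s := by simp [hs_def]; linarith
          have hs2 : s < 1/2 := by simp [hs_def]; linarith
          have hrel := h3 s hs0 hs2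
          have e1 : opow ρ s * opow ρ (1/2 - s) = opow ρ (1/2) := by
            rw [← opow_add ρ hρpos hs0 (by simp [hs_def]; linarith)]
            congr 1; ring
          have e2 : opow ρ (1/2) * opow ρ s = opow ρ t := by
            rw [← opow_add ρ hρpos (by norm_num) hs0]
            congr 1; simp [hs_def]
          have e3 : (1/2 : ℝ) - s = 1 - t := by simp [hs_def]; ring
          calc opow ρ t * X * opow ρ (1 - t)
              = (opow ρ (1/2) * opow ρ s) * X * opow ρ (1/2 - s) := by rw [e2, e3]
            _ = opow ρ (1/2) * (opow ρ s * X) * opow ρ (1/2 - s) := by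
                simp only [mul_assoc]
            _ = opow ρ (1/2) * (F ((s : ℝ) : ℂ) * opow ρ s) * opow ρ (1/2 - s) := by
                rw [hrel]
            _ = opow ρ (1/2) * F ((s : ℝ) : ℂ) * (opow ρ s * opow ρ (1/2 - s)) := by
                simp only [mul_assoc]
            _ = R * F ((s : ℝ) : ℂ) * R := by rw [e1, hR_def]
        · push_neg at hcase
          set u : ℝ := 1/2 - t with hu_def
          have hu0 : 0 ≤ u := by simp [hu_def]; linarith
          have hu2 : u < 1/2 := by simp [hu_def]; linarith
          have hrel := h4 u hu0 hu2
          have hcast : ((s : ℝ) : ℂ) = -((u : ℝ) : ℂ) := by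
            rw [hs_def, hu_def]; push_cast; ring
          have e1 : opow ρ t * opow ρ u = opow ρ (1/2) := by
            rw [← opow_add ρ hρpos ht0.le hu0]
            congr 1; simp [hu_def]
          have e2 : opow ρ u * opow ρ (1/2) = opow ρ (1 - t) := by
            rw [← opow_add ρ hρpos hu0 (by norm_num)]
            congr 1; simp [hu_def]; ring
          calc opow ρ t * X * opow ρ (1 - t)
              = opow ρ t * X * (opow ρ u * opow ρ (1/2)) := by rw [e2]
            _ = opow ρ t * (X * opow ρ u) * opow ρ (1/2) := by simp only [mul_assoc]
            _ = opow ρ t * (opow ρ u * F (-((u : ℝ) : ℂ))) * opow ρ (1/2) := by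
                rw [hrel]
            _ = (opow ρ t * opow ρ u) * F ((s : ℝ) : ℂ) * opow ρ (1/2) := by
                rw [hcast]; simp only [mul_assoc]
            _ = R * F ((s : ℝ) : ℂ) * R := by rw [e1, hR_def]
      have hFs : ‖F ((s : ℝ) : ℂ)‖ ≤ M := hFM _ hsball
      have : opow ρ t * X * opow ρ (1 - t) * X = R * F ((s : ℝ) : ℂ) * R * X := by
        rw [heq]
      rw [this]
      exact trace_bound b R (F ((s : ℝ) : ℂ)) X hRsa hX haSum haTr M hFs
    by_cases hint : IntervalIntegrable
        (fun t => trElem b (opow ρ t * X * opow ρ (1 - t) * X)) volume 0 1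
    · have h01 : ∀ᵐ t ∂(volume.restrict (Set.Icc (0:ℝ) 1)), t ∈ Set.Ioo (0:ℝ) 1 := by
        rw [ae_restrict_iff' measurableSet_Icc]
        have hz : volume ({0, 1} : Set ℝ) = 0 :=
          (Set.toFinite _).measure_zero volume
        refine ae_iff.mpr (measure_mono_null ?_ hz)
        intro t ht
        simp only [Set.mem_setOf_eq, not_forall] at ht
        obtain ⟨hIcc, hnIoo⟩ := ht
        simp only [Set.mem_Icc] at hIcc
        simp only [Set.mem_Ioo, not_and_or, not_lt] at hnIoo
        simp only [Set.mem_insert_iff, Set.mem_singleton_iff]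
        rcases hnIoo with h | h
        · left; linarith [hIcc.1]
        · right; linarith [hIcc.2]
      have hae : (fun t => trElem b (opow ρ t * X * opow ρ (1 - t) * X))
          ≤ᵐ[volume.restrict (Set.Icc (0:ℝ) 1)] fun _ => M ^ 2 := by
        filter_upwards [h01] with t ht
        calc trElem b (opow ρ t * X * opow ρ (1 - t) * X) ≤ M * ‖X‖ := hpt t ht
          _ ≤ M ^ 2 := by nlinarith
      have hmono := intervalIntegral.integral_mono_ae_restrict (μ := volume)
        (a := (0:ℝ)) (b := 1) (f := fun t => trElem b (opow ρ t * X * opow ρ (1 - t) * X))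
        (g := fun _ => M ^ 2) (by norm_num) hint intervalIntegrable_const hae
      simpa using hmono
    · rw [intervalIntegral.integral_undef hint]
      positivity
  have hSne : S.Nonempty := by
    obtain ⟨F, hF⟩ := hA
    obtain ⟨M0, hM0⟩ := hF.2.1
    exact ⟨max M0 0, le_max_right _ _, F, hF,
      fun t ht => (hM0 t ht).trans (le_max_left _ _)⟩
  have hm0 : 0 ≤ arakiNorm ρ X := le_csInf hSne fun M hM => hM.1
  have hnorm_eq : arakiNorm ρ X = sInf S := rfl
  by_contra hcon
  push_neg at hcon
  set I := ∫ t in (0:ℝ)..1, trElem b (opow ρ t * X * opow ρ (1 - t) * X) with hI_def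
  set m := arakiNorm ρ X with hm_def
  have hεpos : 0 < min 1 ((I - m ^ 2) / (2 * m + 1)) := by
    refine lt_min (by norm_num) ?_
    apply div_pos (by linarith) (by linarith)
  obtain ⟨M, hMS, hMlt⟩ := exists_lt_of_csInf_lt hSne
    (by rw [← hnorm_eq]; exact lt_add_of_pos_right m hεpos)
  have h1 := key M hMS
  have hM0 : 0 ≤ M := hMS.1
  have hε1 : min 1 ((I - m ^ 2) / (2 * m + 1)) ≤ 1 := min_le_left _ _
  have hε2 : min 1 ((I - m ^ 2) / (2 * m + 1)) ≤ (I - m ^ 2) / (2 * m + 1) :=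
    min_le_right _ _
  have hkey : min 1 ((I - m ^ 2) / (2 * m + 1)) * (2 * m + 1) ≤ I - m ^ 2 := by
    calc min 1 ((I - m ^ 2) / (2 * m + 1)) * (2 * m + 1)
        ≤ (I - m ^ 2) / (2 * m + 1) * (2 * m + 1) :=
          mul_le_mul_of_nonneg_right hε2 (by linarith)
      _ = I - m ^ 2 := by field_simp
  nlinarith [hεpos, hε1, hkey, hMlt, h1, hM0, hm0, hcon]
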